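/- Let d and g be integers with 2 ≤ g ≤ 2d. Then the extensions I_f and J_f of the ideals I and J to the localization ℂ[x_{ij}]_f of ℂ[x_{ij}] at f are equal: I_f = J_f. -/

import Mathlib

open MvPolynomial Matrix

/-- The map `Fin (g-1) → Fin g` skipping the index `i` (deleting the `i`-th row). -/
def rowDelete {g : ℕ} (i : Fin g) : Fin (g - 1) → Fin g :=
  fun j => if (j : ℕ) < (i : ℕ) then ⟨j, lt_of_lt_of_le j.isLt (Nat.sub_le g 1)⟩
    else ⟨(j : ℕ) + 1, by have := j.isLt; omega⟩

/-- The generic `g × 2d` matrix `M = (x_{ij})` over `ℂ[x_{ij}]`. -/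
noncomputable def genericMatrix (g d : ℕ) :
    Matrix (Fin g) (Fin (2 * d)) (MvPolynomial (Fin g × Fin (2 * d)) ℂ) :=
  fun i j => X (i, j)

/-- The ideal `I` generated by all `g × g` minors of `M`. -/
noncomputable def idealI (g d : ℕ) : Ideal (MvPolynomial (Fin g × Fin (2 * d)) ℂ) :=
  Ideal.span { p | ∃ c : Fin g → Fin (2 * d), StrictMono c ∧
    p = ((genericMatrix g d).submatrix id c).det }

/-- The ideal `J` generated by the minors `det M_{(1,…,g-1,i)}` for `g ≤ i ≤ 2d`
(here written 0-indexed: columns `0,…,g-2` together with a column `i` with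
`g - 1 ≤ i`). -/
noncomputable def idealJ (g d : ℕ) (hgd : g ≤ 2 * d) :
    Ideal (MvPolynomial (Fin g × Fin (2 * d)) ℂ) :=
  Ideal.span { p | ∃ i : Fin (2 * d), g - 1 ≤ (i : ℕ) ∧
    p = ((genericMatrix g d).submatrix id
      (fun k : Fin g => if (k : ℕ) < g - 1 then Fin.castLE hgd k else i)).det }

/-- `f` is the product of the `(g-1) × (g-1)` minors of the submatrix `N` of `M`
consisting of the first `g - 1` columns (one minor for each deleted row). -/
noncomputable def theF (g d : ℕ) (hgd : g ≤ 2 * d) :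
    MvPolynomial (Fin g × Fin (2 * d)) ℂ :=
  ∏ i : Fin g,
    ((genericMatrix g d).submatrix (rowDelete i)
      (fun j : Fin (g - 1) => Fin.castLE (le_trans (Nat.sub_le g 1) hgd) j)).det

namespace Prop41Aux

noncomputable def theA (g d : ℕ) (hgd : g ≤ 2 * d) :
    Matrix (Fin g) (Fin g) (MvPolynomial (Fin g × Fin (2 * d)) ℂ) :=
  Matrix.of fun i k => if (k : ℕ) < g - 1 then X (i, Fin.castLE hgd k)
    else if (i : ℕ) = g - 1 then 1 else 0

lemma updateColumn_theA {g d : ℕ} (hg : 2 ≤ g) (hgd : g ≤ 2 * d) (j : Fin (2 * d)) :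
    (theA g d hgd).updateCol ⟨g - 1, by omega⟩ (fun i => genericMatrix g d i j) =
      (genericMatrix g d).submatrix id
        (fun k : Fin g => if (k : ℕ) < g - 1 then Fin.castLE hgd k else j) := by
  ext i k
  rw [Matrix.updateCol_apply]
  by_cases h : (k : ℕ) < g - 1
  · have hk : k ≠ (⟨g - 1, by omega⟩ : Fin g) := by
      intro he
      rw [he] at h
      simp at h
    simp [hk, theA, genericMatrix, h]
  · have hk : k = (⟨g - 1, by omega⟩ : Fin g) := by
      apply Fin.ext
      have := k.isLt
      simp only [Fin.val_mk]
      omega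
    simp [hk, genericMatrix, h]

lemma cramer_mem_J {g d : ℕ} (hg : 2 ≤ g) (hgd : g ≤ 2 * d) (j : Fin (2 * d)) :
    cramer (theA g d hgd) (fun i => genericMatrix g d i j) ⟨g - 1, by omega⟩ ∈
      idealJ g d hgd := by
  rw [Matrix.cramer_apply, updateColumn_theA hg hgd]
  by_cases hj : g - 1 ≤ (j : ℕ)
  · exact Ideal.subset_span ⟨j, hj, rfl⟩
  · push_neg at hj
    have hz : ((genericMatrix g d).submatrix id
        (fun k : Fin g => if (k : ℕ) < g - 1 then Fin.castLE hgd k else j)).det = 0 := by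
      apply Matrix.det_zero_of_column_eq
        (i := (⟨(j : ℕ), by omega⟩ : Fin g)) (j := (⟨g - 1, by omega⟩ : Fin g))
      · intro he
        have := congrArg Fin.val he
        simp only [Fin.val_mk] at this
        omega
      · intro k
        simp [genericMatrix, hj, Fin.ext_iff]
    rw [hz]
    exact Ideal.zero_mem _

lemma key {g d : ℕ} (hg : 2 ≤ g) (hgd : g ≤ 2 * d) (c : Fin g → Fin (2 * d)) :
    (theA g d hgd).det ^ g * ((genericMatrix g d).submatrix id c).det ∈ idealJ g d hgd := by
  set A' := theA g d hgd with hA'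
  set W : Matrix (Fin g) (Fin g) (MvPolynomial (Fin g × Fin (2 * d)) ℂ) :=
    Matrix.of fun jj kk => cramer A' (fun i => genericMatrix g d i (c kk)) jj with hW
  have hAW : A' * W = A'.det • ((genericMatrix g d).submatrix id c) := by
    refine Matrix.ext fun i k => ?_
    have h1 := congrFun (Matrix.mulVec_cramer A' (fun i => genericMatrix g d i (c k))) i
    simpa [Matrix.mul_apply, Matrix.mulVec, dotProduct, hW] using h1
  have hdet : A'.det * W.det = A'.det ^ g * ((genericMatrix g d).submatrix id c).det := by
    rw [← Matrix.det_mul, hAW, Matrix.det_smul, Fintype.card_fin]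
  rw [← hdet]
  have hWJ : W.det ∈ idealJ g d hgd := by
    rw [Matrix.det_apply']
    refine Ideal.sum_mem _ fun σ _ => Ideal.mul_mem_left _ _ ?_
    rw [← Finset.mul_prod_erase Finset.univ _
      (Finset.mem_univ (σ⁻¹ (⟨g - 1, by omega⟩ : Fin g)))]
    refine Ideal.mul_mem_right _ _ ?_
    have hσ : σ (σ⁻¹ (⟨g - 1, by omega⟩ : Fin g)) = ⟨g - 1, by omega⟩ :=
      Equiv.apply_symm_apply σ _
    rw [hW]
    simp only [Matrix.of_apply, hσ]
    exact cramer_mem_J hg hgd _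
  exact Ideal.mul_mem_left _ _ hWJ

end Prop41Aux

namespace Prop41Aux

lemma detA_eq {g d : ℕ} (hg : 2 ≤ g) (hgd : g ≤ 2 * d) :
    (theA g d hgd).det =
      ((genericMatrix g d).submatrix (rowDelete (⟨g - 1, by omega⟩ : Fin g))
        (fun j : Fin (g - 1) => Fin.castLE (le_trans (Nat.sub_le g 1) hgd) j)).det := by
  have hm : g - 1 + 1 = g := by omega
  let e : Fin (g - 1 + 1) ≃ Fin g := finCongr hm
  rw [← Matrix.det_submatrix_equiv_self e (theA g d hgd)]
  rw [Matrix.det_succ_column _ (Fin.last (g - 1))]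
  rw [Finset.sum_eq_single (Fin.last (g - 1))]
  · have hent : ((theA g d hgd).submatrix e e) (Fin.last (g - 1)) (Fin.last (g - 1)) = 1 := by
      simp [theA, e, finCongr]
    rw [hent]
    have hpow : ((-1 : MvPolynomial (Fin g × Fin (2 * d)) ℂ)) ^
        ((Fin.last (g-1) : ℕ) + (Fin.last (g-1) : ℕ)) = 1 :=
      Even.neg_one_pow ⟨(Fin.last (g-1) : ℕ), by ring⟩
    rw [hpow, one_mul, one_mul]
    congr 1
    refine Matrix.ext fun i k => ?_
    have hk : ((e k.castSucc : Fin g) : ℕ) < g - 1 := by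
      simp only [finCongr_apply, Fin.coe_cast, Fin.coe_castSucc, e]; exact k.isLt
    simp only [Matrix.submatrix_apply, Fin.succAbove_last, theA, Matrix.of_apply,
      if_pos hk, genericMatrix]
    refine congrArg X (Prod.ext ?_ ?_)
    · apply Fin.ext
      simp [e, finCongr, rowDelete, i.isLt]
    · apply Fin.ext
      simp [e, finCongr]
  · intro i _ hi
    have hent : ((theA g d hgd).submatrix e e) i (Fin.last (g - 1)) = 0 := by
      have hi' : (i : ℕ) ≠ g - 1 := by
        intro h
        exact hi (Fin.ext (by simpa using h))
      simp [theA, e, finCongr, hi']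
    rw [hent]
    ring
  · intro h
    exact absurd (Finset.mem_univ _) h

end Prop41Aux

/-- Proposition (4.1): the extensions of `I` and `J` to the localization
`ℂ[x_{ij}]_f` coincide. -/
theorem extension_of_I_eq_extension_of_J (g d : ℕ) (hg : 2 ≤ g) (hgd : g ≤ 2 * d) :
    (idealI g d).map
        (algebraMap (MvPolynomial (Fin g × Fin (2 * d)) ℂ)
          (Localization.Away (theF g d hgd))) =
      (idealJ g d hgd).map
        (algebraMap (MvPolynomial (Fin g × Fin (2 * d)) ℂ)
          (Localization.Away (theF g d hgd))) := by
  apply le_antisymm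
  · rw [idealI, Ideal.map_span, Ideal.span_le]
    rintro _ ⟨p, ⟨c, -, rfl⟩, rfl⟩
    have hkey := Prop41Aux.key hg hgd c
    have hunit : IsUnit (algebraMap (MvPolynomial (Fin g × Fin (2 * d)) ℂ)
        (Localization.Away (theF g d hgd)) ((Prop41Aux.theA g d hgd).det)) := by
      refine IsLocalization.Away.isUnit_of_dvd (x := theF g d hgd) ?_
      rw [Prop41Aux.detA_eq hg hgd]
      exact Finset.dvd_prod_of_mem _ (Finset.mem_univ (⟨g - 1, by omega⟩ : Fin g))
    have hmem := Ideal.mem_map_of_mem (algebraMap (MvPolynomial (Fin g × Fin (2 * d)) ℂ)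
      (Localization.Away (theF g d hgd))) hkey
    rw [_root_.map_mul, map_pow] at hmem
    obtain ⟨v, hv⟩ := hunit.pow g
    have heq : algebraMap (MvPolynomial (Fin g × Fin (2 * d)) ℂ)
        (Localization.Away (theF g d hgd)) ((genericMatrix g d).submatrix id c).det =
        ↑v⁻¹ * (↑v * algebraMap _ _ ((genericMatrix g d).submatrix id c).det) := by
      rw [← mul_assoc, Units.inv_mul, one_mul]
    rw [heq, hv]
    exact Ideal.mul_mem_left _ _ hmem
  · apply Ideal.map_mono
    rw [idealJ, Ideal.span_le]
    rintro _ ⟨i, hi, rfl⟩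
    apply Ideal.subset_span
    refine ⟨_, ?_, rfl⟩
    intro a b hab
    have hab' : (a : ℕ) < (b : ℕ) := hab
    show (if (a : ℕ) < g - 1 then Fin.castLE hgd a else i) <
      (if (b : ℕ) < g - 1 then Fin.castLE hgd b else i)
    by_cases hb : (b : ℕ) < g - 1
    · have ha : (a : ℕ) < g - 1 := lt_trans hab' hb
      rw [if_pos ha, if_pos hb]
      exact hab
    · have hbv : (b : ℕ) = g - 1 := by have := b.isLt; omega
      have ha : (a : ℕ) < g - 1 := by omega
      rw [if_pos ha, if_neg hb]
      rw [Fin.lt_def]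
      simp only [Fin.coe_castLE]
      omega
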